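/- Let (Ω, F, (F_t)_{t∈[0,T]}, P) be a filtered probability space, and let (X_t)_{t∈[0,T]} be an adapted real-valued process with E[X_t²] < ∞ for all t. Let (Z_t)_{t∈[0,T]} be an adapted nonnegative process and let C ≥ 0, ϑ ∈ (0,1] be such that E[Z_t²] ≤ C² for all t ∈ [0,T] and, for all 0 ≤ t ≤ t+h ≤ T, E[(X_{t+h} − X_t)² | F_t] ≤ h^ϑ Z_t almost surely. Then for all t, h with 0 ≤ t−h ≤ t ≤ t+h ≤ T: E[ (min(|X_{t+h} − X_t|, 1))² · (min(|X_t − X_{t−h}|, 1))² ] ≤ E[ (X_{t+h} − X_t)² · |X_t − X_{t−h}| ] ≤ C^{3/2} · h^{3ϑ/2}. -/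

import Mathlib

open MeasureTheory

/-- Abstract two-increment moment bound (Chentsov-type criterion): if `X` is adapted with
finite second moments, `Z` is an adapted nonnegative process with `E[Z_t²] ≤ C²`, and
`E[(X_{t+h} − X_t)² | F_t] ≤ h^ϑ Z_t` a.s. for `0 ≤ t ≤ t+h ≤ T`, then for
`0 ≤ t−h ≤ t ≤ t+h ≤ T`:
`E[(min(|X_{t+h}−X_t|,1))² (min(|X_t−X_{t−h}|,1))²] ≤ E[(X_{t+h}−X_t)² |X_t−X_{t−h}|]
  ≤ C^{3/2} h^{3ϑ/2}`. -/
theorem two_increment_moment_bound {Ω : Type*} {m0 : MeasurableSpace Ω}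
    (P : Measure Ω) [IsProbabilityMeasure P] (T : ℝ) (hT : 0 ≤ T)
    (F : Filtration ℝ m0) (X Z : ℝ → Ω → ℝ)
    (hXadapted : Adapted F X) (hZadapted : Adapted F Z)
    (hX2 : ∀ t, 0 ≤ t → t ≤ T → MemLp (X t) 2 P)
    (hZnonneg : ∀ t ω, 0 ≤ Z t ω)
    (hZ2 : ∀ t, 0 ≤ t → t ≤ T → MemLp (Z t) 2 P)
    (C ϑ : ℝ) (hC : 0 ≤ C) (hϑ0 : 0 < ϑ) (hϑ1 : ϑ ≤ 1)
    (hZbound : ∀ t, 0 ≤ t → t ≤ T → ∫ ω, (Z t ω) ^ 2 ∂P ≤ C ^ 2)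
    (hcond : ∀ t h : ℝ, 0 ≤ t → 0 ≤ h → t + h ≤ T →
      ∀ᵐ ω ∂P, (P[(fun ω => (X (t + h) ω - X t ω) ^ 2)|F t]) ω ≤ h ^ ϑ * Z t ω) :
    ∀ t h : ℝ, 0 ≤ h → 0 ≤ t - h → t + h ≤ T →
      (∫ ω, (min |X (t + h) ω - X t ω| 1) ^ 2 * (min |X t ω - X (t - h) ω| 1) ^ 2 ∂P
          ≤ ∫ ω, (X (t + h) ω - X t ω) ^ 2 * |X t ω - X (t - h) ω| ∂P) ∧
      ∫ ω, (X (t + h) ω - X t ω) ^ 2 * |X t ω - X (t - h) ω| ∂P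
          ≤ C ^ ((3 : ℝ) / 2) * h ^ (3 * ϑ / 2) := by
  intro t h hh hth htT'
  have ht0 : 0 ≤ t := by linarith
  have htT : t ≤ T := by linarith
  have hthT : t - h ≤ T := by linarith
  have hth0' : 0 ≤ t + h := by linarith
  set a : Ω → ℝ := fun ω => X (t + h) ω - X t ω with ha_def
  set b : Ω → ℝ := fun ω => X t ω - X (t - h) ω with hb_def
  have ha2 : MemLp a 2 P := (hX2 (t + h) hth0' htT').sub (hX2 t ht0 htT)
  have hb2 : MemLp b 2 P := (hX2 t ht0 htT).sub (hX2 (t - h) hth hthT)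
  have haInt : Integrable (fun ω => a ω ^ 2) P := ha2.integrable_sq
  have hbInt : Integrable (fun ω => b ω ^ 2) P := hb2.integrable_sq
  have hZt2 : MemLp (Z t) 2 P := hZ2 t ht0 htT
  have hZtInt : Integrable (Z t) P := hZt2.integrable one_le_two
  have hhp : (0:ℝ) ≤ h ^ ϑ := Real.rpow_nonneg hh ϑ
  have conj : Real.HolderConjugate 2 2 := Real.HolderConjugate.two_two
  have two_eq : ENNReal.ofReal (2:ℝ) = 2 := by norm_num
  -- ∫ Z s ≤ C for admissible s
  have hZint_bound : ∀ s, 0 ≤ s → s ≤ T → ∫ ω, Z s ω ∂P ≤ C := by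
    intro s hs0 hsT
    have hZs2 : MemLp (Z s) 2 P := hZ2 s hs0 hsT
    have h1 : ∫ ω, Z s ω ∂P = ∫ ω, Z s ω * (1:ℝ) ∂P := by simp
    rw [h1]
    have hCS := integral_mul_le_Lp_mul_Lq_of_nonneg (μ := P) conj
      (f := Z s) (g := fun _ => (1:ℝ))
      (Filter.Eventually.of_forall fun ω => hZnonneg s ω)
      (Filter.Eventually.of_forall fun _ => zero_le_one)
      (by rw [two_eq]; exact hZs2) (by rw [two_eq]; exact memLp_const 1)
    refine hCS.trans ?_
    have e1 : ∫ ω, Z s ω ^ (2:ℝ) ∂P = ∫ ω, Z s ω ^ 2 ∂P := by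
      simp [Real.rpow_two]
    have e2 : ∫ _ω : Ω, (1:ℝ) ^ (2:ℝ) ∂P = 1 := by simp
    rw [e1, e2, Real.one_rpow, mul_one]
    calc (∫ ω, Z s ω ^ 2 ∂P) ^ ((1:ℝ)/2)
        ≤ (C ^ 2) ^ ((1:ℝ)/2) := by
          apply Real.rpow_le_rpow (integral_nonneg fun ω => sq_nonneg _)
            (hZbound s hs0 hsT) (by norm_num)
      _ = C := by
          rw [← Real.rpow_two, ← Real.rpow_mul hC]
          norm_num
  -- bound on ∫ b²
  have hB1 : ∫ ω, b ω ^ 2 ∂P ≤ h ^ ϑ * C := by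
    have hthh : t - h + h = t := by ring
    have hcond' := hcond (t - h) h hth hh (by linarith)
    rw [hthh] at hcond'
    have h1 : ∫ ω, b ω ^ 2 ∂P = ∫ ω, (P[(fun ω => b ω ^ 2)|F (t - h)]) ω ∂P :=
      (integral_condExp (F.le (t - h))).symm
    rw [h1]
    calc ∫ ω, (P[(fun ω => b ω ^ 2)|F (t - h)]) ω ∂P
        ≤ ∫ ω, h ^ ϑ * Z (t - h) ω ∂P :=
          integral_mono_ae integrable_condExp
            (((hZ2 (t - h) hth hthT).integrable one_le_two).const_mul _) hcond'
      _ = h ^ ϑ * ∫ ω, Z (t - h) ω ∂P := integral_const_mul _ _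
      _ ≤ h ^ ϑ * C := mul_le_mul_of_nonneg_left (hZint_bound (t - h) hth hthT) hhp
  -- Cauchy–Schwarz: ∫ |b| Z_t ≤ (h^θ C)^{1/2} C
  have hbZ_int : Integrable (fun ω => |b ω| * Z t ω) P := by
    have := (MemLp.smul (p := 2) (q := 2) (r := 1) hZt2 hb2.abs
      (hpqr := ⟨by norm_num [ENNReal.inv_two_add_inv_two]⟩)).integrable le_rfl
    exact this
  have hbZ : ∫ ω, |b ω| * Z t ω ∂P ≤ (h ^ ϑ * C) ^ ((1:ℝ)/2) * C := by
    have hCS := integral_mul_le_Lp_mul_Lq_of_nonneg (μ := P) conj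
      (f := fun ω => |b ω|) (g := Z t)
      (Filter.Eventually.of_forall fun ω => abs_nonneg _)
      (Filter.Eventually.of_forall fun ω => hZnonneg t ω)
      (by rw [two_eq]; exact hb2.abs) (by rw [two_eq]; exact hZt2)
    refine hCS.trans ?_
    have e1 : ∫ ω, |b ω| ^ (2:ℝ) ∂P = ∫ ω, b ω ^ 2 ∂P := by
      refine integral_congr_ae (Filter.Eventually.of_forall fun ω => ?_)
      simp [Real.rpow_two, sq_abs]
    have e2 : ∫ ω, Z t ω ^ (2:ℝ) ∂P = ∫ ω, Z t ω ^ 2 ∂P := by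
      refine integral_congr_ae (Filter.Eventually.of_forall fun ω => ?_)
      simp [Real.rpow_two]
    rw [e1, e2]
    have hZhalf : (∫ ω, Z t ω ^ 2 ∂P) ^ ((1:ℝ)/2) ≤ C := by
      calc (∫ ω, Z t ω ^ 2 ∂P) ^ ((1:ℝ)/2)
          ≤ (C ^ 2) ^ ((1:ℝ)/2) :=
            Real.rpow_le_rpow (integral_nonneg fun ω => sq_nonneg _)
              (hZbound t ht0 htT) (by norm_num)
        _ = C := by
            rw [← Real.rpow_two, ← Real.rpow_mul hC]
            norm_num
    have hbhalf : (∫ ω, b ω ^ 2 ∂P) ^ ((1:ℝ)/2) ≤ (h ^ ϑ * C) ^ ((1:ℝ)/2) :=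
      Real.rpow_le_rpow (integral_nonneg fun ω => sq_nonneg _) hB1 (by norm_num)
    exact mul_le_mul hbhalf hZhalf (Real.rpow_nonneg (integral_nonneg fun ω => sq_nonneg _) _)
      (Real.rpow_nonneg (by positivity) _)
  set B : ℝ := h ^ ϑ * ((h ^ ϑ * C) ^ ((1:ℝ)/2) * C) with hB_def
  have hBnonneg : 0 ≤ B := by positivity
  -- measurability
  have hb_measFt : StronglyMeasurable[F t] b :=
    ((hXadapted t).sub ((hXadapted (t - h)).mono (F.mono (by linarith)) le_rfl)).stronglyMeasurable
  have ha_meas : AEStronglyMeasurable a P :=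
    (((hXadapted (t + h)).mono (F.le (t + h)) le_rfl).sub
      ((hXadapted t).mono (F.le t) le_rfl)).aestronglyMeasurable
  have hb_meas : AEStronglyMeasurable b P := ((hb_measFt.mono (F.le t))).aestronglyMeasurable
  -- truncation step
  have hstep : ∀ n : ℕ, ∫ ω, min |b ω| (n:ℝ) * a ω ^ 2 ∂P ≤ B := by
    intro n
    set W : Ω → ℝ := fun ω => min |b ω| (n:ℝ) with hW_def
    have hW_nonneg : ∀ ω, 0 ≤ W ω := fun ω => le_min (abs_nonneg _) (n.cast_nonneg)
    have hW_measFt : StronglyMeasurable[F t] W :=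
      (continuous_abs.min continuous_const).comp_stronglyMeasurable hb_measFt
    have hW_meas : AEStronglyMeasurable W P := (hW_measFt.mono (F.le t)).aestronglyMeasurable
    have hW_bdd : ∀ ω, ‖W ω‖ ≤ (n:ℝ) := by
      intro ω
      rw [Real.norm_of_nonneg (hW_nonneg ω)]
      exact min_le_right _ _
    have hWa_int : Integrable (fun ω => W ω * a ω ^ 2) P :=
      haInt.bdd_mul hW_meas (Filter.Eventually.of_forall hW_bdd)
    have hpull : P[(fun ω => W ω * a ω ^ 2)|F t] =ᵐ[P] fun ω => W ω * (P[(fun ω => a ω ^ 2)|F t]) ω :=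
      condExp_mul_of_stronglyMeasurable_left hW_measFt hWa_int haInt
    have hcond' := hcond t h ht0 hh htT'
    calc ∫ ω, W ω * a ω ^ 2 ∂P
        = ∫ ω, (P[(fun ω => W ω * a ω ^ 2)|F t]) ω ∂P := (integral_condExp (F.le t)).symm
      _ = ∫ ω, W ω * (P[(fun ω => a ω ^ 2)|F t]) ω ∂P := integral_congr_ae hpull
      _ ≤ ∫ ω, W ω * (h ^ ϑ * Z t ω) ∂P := by
          refine integral_mono_ae (integrable_condExp.bdd_mul hW_meas (Filter.Eventually.of_forall hW_bdd))
            ((hZtInt.const_mul _).bdd_mul hW_meas (Filter.Eventually.of_forall hW_bdd)) ?_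
          filter_upwards [hcond'] with ω hω
          exact mul_le_mul_of_nonneg_left hω (hW_nonneg ω)
      _ ≤ ∫ ω, h ^ ϑ * (|b ω| * Z t ω) ∂P := by
          refine integral_mono_ae ((hZtInt.const_mul _).bdd_mul hW_meas (Filter.Eventually.of_forall hW_bdd))
            (hbZ_int.const_mul _) ?_
          refine Filter.Eventually.of_forall fun ω => ?_
          show W ω * (h ^ ϑ * Z t ω) ≤ h ^ ϑ * (|b ω| * Z t ω)
          have : W ω * (h ^ ϑ * Z t ω) = h ^ ϑ * (W ω * Z t ω) := by ring
          rw [this]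
          exact mul_le_mul_of_nonneg_left
            (mul_le_mul_of_nonneg_right (min_le_left _ _) (hZnonneg t ω)) hhp
      _ = h ^ ϑ * ∫ ω, |b ω| * Z t ω ∂P := integral_const_mul _ _
      _ ≤ B := by
          rw [hB_def]
          exact mul_le_mul_of_nonneg_left hbZ hhp
  -- monotone convergence
  have hg_int : ∀ n : ℕ, Integrable (fun ω => min |b ω| (n:ℝ) * a ω ^ 2) P := by
    intro n
    refine haInt.bdd_mul (c := (n:ℝ)) ?_ (Filter.Eventually.of_forall fun ω => ?_)
    · exact (((continuous_abs.min continuous_const).comp_stronglyMeasurable hb_measFt).mono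
        (F.le t)).aestronglyMeasurable
    · rw [Real.norm_of_nonneg (le_min (abs_nonneg _) (n.cast_nonneg))]
      exact min_le_right _ _
  have hsup : ∀ ω, (⨆ n : ℕ, ENNReal.ofReal (min |b ω| (n:ℝ) * a ω ^ 2))
      = ENNReal.ofReal (a ω ^ 2 * |b ω|) := by
    intro ω
    apply le_antisymm
    · refine iSup_le fun n => ENNReal.ofReal_le_ofReal ?_
      rw [mul_comm]
      exact mul_le_mul_of_nonneg_left (min_le_left _ _) (sq_nonneg _)
    · refine le_iSup_of_le ⌈|b ω|⌉₊ (le_of_eq ?_)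
      rw [min_eq_left (Nat.le_ceil _), mul_comm]
  have hmono : Monotone (fun (n : ℕ) (ω : Ω) => ENNReal.ofReal (min |b ω| (n:ℝ) * a ω ^ 2)) := by
    intro m n hmn ω
    exact ENNReal.ofReal_le_ofReal
      (mul_le_mul_of_nonneg_right (min_le_min le_rfl (Nat.cast_le.2 hmn)) (sq_nonneg _))
  have hbm : Measurable b := (hb_measFt.mono (F.le t)).measurable
  have ham : Measurable a :=
    ((((hXadapted (t + h)).mono (F.le (t + h)) le_rfl).sub
      ((hXadapted t).mono (F.le t) le_rfl)))
  have hgn_meas : ∀ n : ℕ, Measurable fun ω => ENNReal.ofReal (min |b ω| (n:ℝ) * a ω ^ 2) :=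
    fun n => ((hbm.abs.min measurable_const).mul (ham.pow_const 2)).ennreal_ofReal
  have hfin : ∫⁻ ω, ENNReal.ofReal (a ω ^ 2 * |b ω|) ∂P ≤ ENNReal.ofReal B := by
    have e : ∫⁻ ω, ENNReal.ofReal (a ω ^ 2 * |b ω|) ∂P
        = ⨆ n : ℕ, ∫⁻ ω, ENNReal.ofReal (min |b ω| (n:ℝ) * a ω ^ 2) ∂P := by
      rw [← lintegral_iSup hgn_meas hmono]
      exact lintegral_congr fun ω => (hsup ω).symm
    rw [e]
    refine iSup_le fun n => ?_
    rw [← ofReal_integral_eq_lintegral_ofReal (hg_int n)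
      (Filter.Eventually.of_forall fun ω =>
        mul_nonneg (le_min (abs_nonneg _) (n.cast_nonneg)) (sq_nonneg _))]
    exact ENNReal.ofReal_le_ofReal (hstep n)
  have hg_nonneg : 0 ≤ᵐ[P] fun ω => a ω ^ 2 * |b ω| :=
    Filter.Eventually.of_forall fun ω => mul_nonneg (sq_nonneg _) (abs_nonneg _)
  have hg_meas : AEStronglyMeasurable (fun ω => a ω ^ 2 * |b ω|) P :=
    ((ham.pow_const 2).mul hbm.abs).aestronglyMeasurable
  have hgInt : Integrable (fun ω => a ω ^ 2 * |b ω|) P := by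
    refine ⟨hg_meas, ?_⟩
    rw [hasFiniteIntegral_iff_ofReal hg_nonneg]
    exact lt_of_le_of_lt hfin ENNReal.ofReal_lt_top
  have hmain : ∫ ω, a ω ^ 2 * |b ω| ∂P ≤ B := by
    rw [integral_eq_lintegral_of_nonneg_ae hg_nonneg hg_meas]
    calc (∫⁻ ω, ENNReal.ofReal (a ω ^ 2 * |b ω|) ∂P).toReal
        ≤ (ENNReal.ofReal B).toReal := ENNReal.toReal_mono ENNReal.ofReal_ne_top hfin
      _ = B := ENNReal.toReal_ofReal hBnonneg
  -- rewrite B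
  have hBeq : B = C ^ ((3:ℝ)/2) * h ^ (3 * ϑ / 2) := by
    rw [hB_def, Real.mul_rpow hhp hC]
    have e2 : h ^ (3 * ϑ / 2) = h ^ ϑ * (h ^ ϑ) ^ ((1:ℝ)/2) := by
      rw [← Real.rpow_mul hh, show 3 * ϑ / 2 = ϑ + ϑ * (1/2) by ring,
        Real.rpow_add' hh (by positivity)]
    have e3 : C ^ ((3:ℝ)/2) = C ^ ((1:ℝ)/2) * C := by
      rw [show (3:ℝ)/2 = 1/2 + 1 by norm_num, Real.rpow_add' hC (by norm_num), Real.rpow_one]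
    rw [e2, e3]; ring
  constructor
  · refine integral_mono_of_nonneg
      (Filter.Eventually.of_forall fun ω => mul_nonneg (sq_nonneg _) (sq_nonneg _)) hgInt
      (Filter.Eventually.of_forall fun ω => ?_)
    have h1 : (min |a ω| 1) ^ 2 ≤ a ω ^ 2 := by
      rw [← sq_abs (a ω)]
      exact pow_le_pow_left₀ (le_min (abs_nonneg _) zero_le_one) (min_le_left _ _) 2
    have h2 : (min |b ω| 1) ^ 2 ≤ |b ω| := by
      calc (min |b ω| 1) ^ 2 = min |b ω| 1 * min |b ω| 1 := sq _
        _ ≤ 1 * min |b ω| 1 :=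
            mul_le_mul_of_nonneg_right (min_le_right _ _) (le_min (abs_nonneg _) zero_le_one)
        _ = min |b ω| 1 := one_mul _
        _ ≤ |b ω| := min_le_left _ _
    exact mul_le_mul h1 h2 (sq_nonneg _) (sq_nonneg _)
  · rw [← hBeq]; exact hmain
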